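/- Let p ≥ 4 be even and A a real matrix. The Schatten p-norm satisfies ‖A‖_{S_p}^p = Tr((A^T A)^{p/2}), and for matrices A, E, the second-order term in the expansion of ‖A+E‖_{S_p}^p is bounded by O(p²)·‖A‖_{S_∞}^{p−2}·‖E‖_F². In particular, Tr((A^T A)^{p/2−2} A^T E E^T A) ≤ ‖A‖_{S_∞}^{p−2} ‖E‖_F². -/

import Mathlib

open Matrix
open scoped Matrix.Norms.L2Operator

/-- The spectral (ℓ_2 operator, Schatten ∞) norm of a real matrix. -/
noncomputable def specNorm {m n : Type*} [Fintype m] [Fintype n] [DecidableEq n]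
    (A : Matrix m n ℝ) : ℝ :=
  ‖(Matrix.toEuclideanLin A).toContinuousLinearMap‖

/-- The Frobenius norm of a real matrix. -/
noncomputable def frobNorm {m n : Type*} [Fintype m] [Fintype n] (A : Matrix m n ℝ) : ℝ :=
  Real.sqrt (∑ i, ∑ j, (A i j) ^ 2)

/-- The i-th singular value of A: the square root of the i-th eigenvalue of AᵀA. -/
noncomputable def singVal {m n : ℕ} (A : Matrix (Fin m) (Fin n) ℝ) (i : Fin n) : ℝ :=
  Real.sqrt ((Matrix.isHermitian_conjTranspose_mul_self A).eigenvalues i)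

private theorem aux_comm {m n : ℕ} (A : Matrix (Fin m) (Fin n) ℝ) (q : ℕ) :
    A * (Aᵀ * A) ^ q = (A * Aᵀ) ^ q * A := by
  induction q with
  | zero => simp
  | succ q ih =>
    rw [pow_succ, pow_succ, ← Matrix.mul_assoc, ih]
    simp only [Matrix.mul_assoc]

private theorem trace_pow_herm {n : ℕ} (B : Matrix (Fin n) (Fin n) ℝ) (hB : B.IsHermitian)
    (k : ℕ) : Matrix.trace (B ^ k) = ∑ i, hB.eigenvalues i ^ k := by
  have hU := (Matrix.mem_unitaryGroup_iff).mp (hB.eigenvectorUnitary).2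
  have hU' := (Matrix.mem_unitaryGroup_iff').mp (hB.eigenvectorUnitary).2
  set U : Matrix (Fin n) (Fin n) ℝ := (hB.eigenvectorUnitary : Matrix (Fin n) (Fin n) ℝ)
    with hUdef
  set D : Matrix (Fin n) (Fin n) ℝ := Matrix.diagonal (RCLike.ofReal ∘ hB.eigenvalues) with hD
  have habsorb : ∀ X : Matrix (Fin n) (Fin n) ℝ, star U * (U * X) = X := by
    intro X; rw [← mul_assoc, hU', one_mul]
  have hpow : B ^ k = U * D ^ k * star U := by
    induction k with
    | zero => simp [hU]
    | succ k ih =>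
      rw [pow_succ, pow_succ, ih]
      conv_lhs => rw [hB.spectral_theorem, Unitary.conjStarAlgAut_apply]
      rw [← hUdef, ← hD]
      simp only [mul_assoc, habsorb]
  rw [hpow, Matrix.trace_mul_cycle, hU', one_mul, hD, diagonal_pow, trace_diagonal]
  simp

/-- for even p ≥ 4, the Schatten p-norm satisfies
    ‖A‖_{S_p}^p = Tr((AᵀA)^{p/2}), and
    Tr((AᵀA)^{p/2−2} AᵀEEᵀA) ≤ ‖A‖_{S_∞}^{p−2} ‖E‖_F². -/
theorem stmt_18 (p : ℕ) (hp : 4 ≤ p) (hpeven : Even p)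
    (m n : ℕ) (A E : Matrix (Fin m) (Fin n) ℝ) :
    (∑ i, singVal A i ^ p) = Matrix.trace ((Aᵀ * A) ^ (p / 2)) ∧
      Matrix.trace ((Aᵀ * A) ^ (p / 2 - 2) * Aᵀ * E * Eᵀ * A) ≤
        specNorm A ^ (p - 2) * frobNorm E ^ 2 := by
  have hev : ∀ i, 0 ≤ (Matrix.isHermitian_conjTranspose_mul_self A).eigenvalues i :=
    fun i => (Matrix.posSemidef_conjTranspose_mul_self A).eigenvalues_nonneg i
  constructor
  · -- Part 1
    obtain ⟨k, hk⟩ := hpeven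
    have hk2 : p = 2 * k := by omega
    have hdiv : p / 2 = k := by omega
    rw [hdiv, trace_pow_herm (Aᵀ * A) (Matrix.isHermitian_conjTranspose_mul_self A) k]
    refine Finset.sum_congr rfl fun i _ => ?_
    rw [singVal, hk2, pow_mul, Real.sq_sqrt (hev i)]
    rfl
  · -- Part 2
    set q := p / 2 - 2 with hqdef
    have hp2 : p % 2 = 0 := Nat.even_iff.mp hpeven
    have hq : 2 * (q + 1) = p - 2 := by omega
    -- specNorm is the scoped L2 operator norm
    have hspec : specNorm A = ‖A‖ := rfl
    -- rearrange the trace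
    have h1 : (Aᵀ * A) ^ q * Aᵀ * E * Eᵀ * A = ((Aᵀ * A) ^ q * (Aᵀ * E)) * (Eᵀ * A) := by
      simp only [Matrix.mul_assoc]
    have h2 : (Eᵀ * A) * ((Aᵀ * A) ^ q * (Aᵀ * E)) = Eᵀ * ((A * Aᵀ) ^ (q + 1) * E) := by
      rw [Matrix.mul_assoc Eᵀ A, ← Matrix.mul_assoc A, aux_comm, pow_succ]
      simp only [Matrix.mul_assoc]
    rw [h1, Matrix.trace_mul_comm, h2]
    set C : Matrix (Fin m) (Fin m) ℝ := (A * Aᵀ) ^ (q + 1) with hC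
    -- trace as sum over columns
    have htr : Matrix.trace (Eᵀ * (C * E)) = ∑ j, (fun a => E a j) ⬝ᵥ (C *ᵥ fun a => E a j) := by
      simp [Matrix.trace, Matrix.diag, Matrix.mul_apply, dotProduct, Matrix.mulVec,
        Finset.mul_sum, Finset.sum_mul, mul_comm, mul_left_comm]
    rw [htr]
    -- operator norm bound on C
    have hAt : ‖Aᵀ‖ = ‖A‖ := by
      rw [← conjTranspose_eq_transpose_of_trivial, l2_opNorm_conjTranspose]
    have hAAt : ‖A * Aᵀ‖ = ‖A‖ * ‖A‖ := by
      have h : A * Aᵀ = (Aᵀ)ᴴ * Aᵀ := by simp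
      rw [h, l2_opNorm_conjTranspose_mul_self, hAt]
    have hCnorm : ‖C‖ ≤ ‖A‖ ^ (p - 2) := by
      calc ‖C‖ ≤ ‖A * Aᵀ‖ ^ (q + 1) := norm_pow_le' _ (Nat.succ_pos q)
        _ = (‖A‖ ^ 2) ^ (q + 1) := by rw [hAAt, sq]
        _ = ‖A‖ ^ (2 * (q + 1)) := by rw [← pow_mul]
        _ = ‖A‖ ^ (p - 2) := by rw [hq]
    -- per-column bound
    have key : ∀ j, (fun a => E a j) ⬝ᵥ (C *ᵥ fun a => E a j) ≤
        ‖A‖ ^ (p - 2) * ∑ i, E i j ^ 2 := by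
      intro j
      set x : EuclideanSpace ℝ (Fin m) := (WithLp.equiv 2 (Fin m → ℝ)).symm (fun a => E a j)
        with hx
      have hdot : (fun a => E a j) ⬝ᵥ (C *ᵥ fun a => E a j) =
          inner (𝕜 := ℝ) x ((EuclideanSpace.equiv (Fin m) ℝ).symm (C *ᵥ fun a => E a j)) := by
        simp [dotProduct, PiLp.inner_apply, RCLike.inner_apply, mul_comm, hx,
          EuclideanSpace.equiv, Matrix.mulVec]
      have hZ : ‖(EuclideanSpace.equiv (Fin m) ℝ).symm (C *ᵥ fun a => E a j)‖ ≤ ‖C‖ * ‖x‖ :=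
        C.l2_opNorm_mulVec x
      have hxsq : ‖x‖ ^ 2 = ∑ i, E i j ^ 2 := by
        rw [hx, EuclideanSpace.norm_eq, Real.sq_sqrt (by positivity)]
        simp [Real.norm_eq_abs, sq_abs]
      calc (fun a => E a j) ⬝ᵥ (C *ᵥ fun a => E a j)
          = inner (𝕜 := ℝ) x ((EuclideanSpace.equiv (Fin m) ℝ).symm (C *ᵥ fun a => E a j)) := hdot
        _ ≤ ‖x‖ * ‖(EuclideanSpace.equiv (Fin m) ℝ).symm (C *ᵥ fun a => E a j)‖ :=
            real_inner_le_norm _ _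
        _ ≤ ‖x‖ * (‖C‖ * ‖x‖) := by
            exact mul_le_mul_of_nonneg_left hZ (norm_nonneg x)
        _ = ‖C‖ * ‖x‖ ^ 2 := by ring
        _ ≤ ‖A‖ ^ (p - 2) * ‖x‖ ^ 2 := by
            exact mul_le_mul_of_nonneg_right hCnorm (by positivity)
        _ = ‖A‖ ^ (p - 2) * ∑ i, E i j ^ 2 := by rw [hxsq]
    -- sum it up
    have hfrob : frobNorm E ^ 2 = ∑ j, ∑ i, E i j ^ 2 := by
      rw [frobNorm, Real.sq_sqrt (by positivity), Finset.sum_comm]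
    calc ∑ j, (fun a => E a j) ⬝ᵥ (C *ᵥ fun a => E a j)
        ≤ ∑ j, ‖A‖ ^ (p - 2) * ∑ i, E i j ^ 2 := Finset.sum_le_sum fun j _ => key j
      _ = ‖A‖ ^ (p - 2) * ∑ j, ∑ i, E i j ^ 2 := by rw [Finset.mul_sum]
      _ = specNorm A ^ (p - 2) * frobNorm E ^ 2 := by rw [hspec, hfrob]
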